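/- Under the hypotheses of the main theorem, the Gauss–Newton sequence x_{k+1} = x_k − F'(x_k)†F(x_k) starting from x₀ ∈ B(x*, r)\{x*} is well defined, remains in B(x*, r), converges to x*, and converges superlinearly: lim_{k→∞} ‖x_{k+1} − x*‖/‖x_k − x*‖ = 0. -/

import Mathlib

/-- Moore–Penrose inverse of an injective closed-range operator: A† = (A*A)⁻¹ A*. -/
noncomputable def pinv {X Y : Type*} [NormedAddCommGroup X] [InnerProductSpace ℝ X]
    [CompleteSpace X] [NormedAddCommGroup Y] [InnerProductSpace ℝ Y] [CompleteSpace Y]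
    (A : X →L[ℝ] Y) : Y →L[ℝ] X :=
  (Ring.inverse ((ContinuousLinearMap.adjoint A).comp A)).comp (ContinuousLinearMap.adjoint A)

section AuxLemmas

open scoped RealInnerProductSpace

variable {X Y : Type*} [NormedAddCommGroup X] [InnerProductSpace ℝ X] [CompleteSpace X]
    [NormedAddCommGroup Y] [InnerProductSpace ℝ Y] [CompleteSpace Y]

open ContinuousLinearMap in
/-- If `A` is bounded below then `A*A` is a unit, `pinv A` is a left inverse of `A`,
and `‖pinv A w‖ ≤ c⁻¹ ‖w‖`. -/
lemma pinv_lemma (A : X →L[ℝ] Y) (c : ℝ) (hc : 0 < c) (h : ∀ u, c * ‖u‖ ≤ ‖A u‖) :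
    (∀ u, pinv A (A u) = u) ∧ (∀ w, ‖pinv A w‖ ≤ c⁻¹ * ‖w‖) := by
  set T : X →L[ℝ] X := (adjoint A).comp A with hT
  have hTinner : ∀ u : X, ⟪T u, u⟫ = ‖A u‖ ^ 2 := by
    intro u
    rw [hT, ContinuousLinearMap.comp_apply, ContinuousLinearMap.adjoint_inner_left,
      real_inner_self_eq_norm_sq]
  -- T bounded below
  have hTlow : ∀ u : X, c ^ 2 * ‖u‖ ≤ ‖T u‖ := by
    intro u
    rcases eq_or_ne u 0 with rfl | hu
    · simp
    have h1 : c ^ 2 * ‖u‖ ^ 2 ≤ ⟪T u, u⟫ := by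
      rw [hTinner]
      calc c ^ 2 * ‖u‖ ^ 2 = (c * ‖u‖) ^ 2 := by ring
        _ ≤ ‖A u‖ ^ 2 := by
            apply sq_le_sq' _ (h u)
            nlinarith [norm_nonneg (A u), h u, mul_nonneg hc.le (norm_nonneg u)]
    have h2 : ⟪T u, u⟫ ≤ ‖T u‖ * ‖u‖ := real_inner_le_norm _ _
    have hun : (0:ℝ) < ‖u‖ := norm_pos_iff.mpr hu
    nlinarith
  have hTanti : AntilipschitzWith ⟨(c^2)⁻¹, by positivity⟩ T := by
    apply T.antilipschitz_of_bound
    intro u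
    have := hTlow u
    show ‖u‖ ≤ (c^2)⁻¹ * ‖T u‖
    rw [inv_mul_eq_div, le_div_iff₀ (by positivity)]
    nlinarith [hTlow u]
  have hinjT : Function.Injective T := hTanti.injective
  -- range of T closed
  have hclosedT : IsClosed (T.range : Set X) := by
    have := hTanti.isClosed_range T.uniformContinuous
    simpa [Set.range, LinearMap.coe_range] using this
  haveI : CompleteSpace (T.range) := hclosedT.completeSpace_coe
  -- T surjective
  have hsurjT : T.range = ⊤ := by
    have horth : (T.range)ᗮ = ⊥ := by
      rw [Submodule.eq_bot_iff]
      intro z hz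
      have hz' : ⟪T z, z⟫ = 0 := by
        have := (Submodule.mem_orthogonal _ z).mp hz (T z) (LinearMap.mem_range_self _ z)
        exact this
      have : ‖A z‖ ^ 2 = 0 := by rw [← hTinner]; exact hz'
      have hAz : ‖A z‖ = 0 := by nlinarith [norm_nonneg (A z)]
      have := h z
      rw [hAz] at this
      have : ‖z‖ ≤ 0 := by nlinarith
      simpa using le_antisymm this (norm_nonneg z)
    exact (Submodule.orthogonal_eq_bot_iff).mp horth
  have hkerT : T.ker = ⊥ := LinearMap.ker_eq_bot.mpr hinjT
  set e := ContinuousLinearEquiv.ofBijective T hkerT hsurjT with he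
  have hce : ∀ v, e v = T v := fun v =>
    congrFun (ContinuousLinearEquiv.coeFn_ofBijective T hkerT hsurjT) v
  have hunit : IsUnit T := by
    refine ⟨⟨T, e.symm.toContinuousLinearMap, ?_, ?_⟩, rfl⟩
    · ext u
      show T (e.symm u) = u
      rw [← hce]; exact e.apply_symm_apply u
    · ext u
      show e.symm (T u) = u
      rw [← hce]; exact e.symm_apply_apply u
  have hinvmul : (Ring.inverse T).comp T = ContinuousLinearMap.id ℝ X := by
    have := Ring.inverse_mul_cancel T hunit
    exact this
  have hmulinv : T.comp (Ring.inverse T) = ContinuousLinearMap.id ℝ X := by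
    have := Ring.mul_inverse_cancel T hunit
    exact this
  constructor
  · intro u
    have : (Ring.inverse T) (T u) = u := by
      have := DFunLike.congr_fun hinvmul u
      simpa using this
    exact this
  · intro w
    set u := pinv A w with hu
    have hTu : T u = adjoint A w := by
      have : T (Ring.inverse T ((adjoint A) w)) = adjoint A w := by
        have := DFunLike.congr_fun hmulinv ((adjoint A) w)
        simpa using this
      simpa [hu, pinv, ContinuousLinearMap.comp_apply] using this
    have h1 : ‖A u‖ ^ 2 = ⟪w, A u⟫ := by
      rw [← hTinner, hTu, ContinuousLinearMap.adjoint_inner_left]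
    have h2 : ‖A u‖ ^ 2 ≤ ‖w‖ * ‖A u‖ := by
      rw [h1]; exact (real_inner_le_norm _ _)
    have h3 : ‖A u‖ ≤ ‖w‖ := by
      rcases le_or_gt ‖A u‖ 0 with h4 | h4
      · exact h4.trans (norm_nonneg w)
      · nlinarith
    rw [inv_mul_eq_div, le_div_iff₀ hc]
    nlinarith [(h u).trans h3]

lemma bounded_below_of_injective_closed (A : X →L[ℝ] Y) (hinj : Function.Injective A)
    (hcl : IsClosed (Set.range (A : X → Y))) : ∃ c : ℝ, 0 < c ∧ ∀ u, c * ‖u‖ ≤ ‖A u‖ := by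
  set S : Submodule ℝ Y := A.range with hS
  have hScl : IsClosed (S : Set Y) := by
    have : (S : Set Y) = Set.range (A : X → Y) := by
      ext y; simp [hS, LinearMap.mem_range]
    rwa [this]
  haveI : CompleteSpace S := hScl.completeSpace_coe
  set A' : X →L[ℝ] S := A.codRestrict S (fun u => LinearMap.mem_range_self _ u) with hA'
  have hker : A'.ker = ⊥ := by
    rw [Submodule.eq_bot_iff]
    intro u hu
    have h0 : A' u = 0 := LinearMap.mem_ker.mp hu
    have : A u = 0 := by
      have := congrArg (Subtype.val) h0
      simpa [hA'] using this
    exact hinj (by simpa using this)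
  have hrange : A'.range = ⊤ := by
    rw [LinearMap.range_eq_top]
    rintro ⟨y, hy⟩
    obtain ⟨u, hu⟩ := hy
    exact ⟨u, by simp [hA', Subtype.ext_iff, hu]⟩
  set e := ContinuousLinearEquiv.ofBijective A' hker hrange with he
  set M : ℝ := max ‖(e.symm : S →L[ℝ] X)‖ 1 with hM
  have hM1 : (1:ℝ) ≤ M := le_max_right _ _
  have hMpos : (0:ℝ) < M := lt_of_lt_of_le one_pos hM1
  refine ⟨M⁻¹, by positivity, fun u => ?_⟩
  have h1 : ‖u‖ ≤ M * ‖A u‖ := by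
    have h2 : e.symm (e u) = u := e.symm_apply_apply u
    have h3 : ‖u‖ ≤ ‖(e.symm : S →L[ℝ] X)‖ * ‖e u‖ := by
      conv_lhs => rw [← h2]
      exact (e.symm : S →L[ℝ] X).le_opNorm (e u)
    have h4 : ‖e u‖ = ‖A u‖ := by
      have : e u = A' u := congrFun (ContinuousLinearEquiv.coeFn_ofBijective A' hker hrange) u
      rw [this]
      rfl
    rw [h4] at h3
    calc ‖u‖ ≤ ‖(e.symm : S →L[ℝ] X)‖ * ‖A u‖ := h3
      _ ≤ M * ‖A u‖ := by
          apply mul_le_mul_of_nonneg_right (le_max_left _ _) (norm_nonneg _)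
  rw [inv_mul_eq_div, div_le_iff₀ hMpos] at *
  nlinarith [h1]

end AuxLemmas

set_option maxHeartbeats 1000000 in
open Set Filter in
theorem stmt14
    {X Y : Type*} [NormedAddCommGroup X] [InnerProductSpace ℝ X] [CompleteSpace X]
    [NormedAddCommGroup Y] [InnerProductSpace ℝ Y] [CompleteSpace Y]
    (Ω : Set X) (hΩ : IsOpen Ω) (F : X → Y) (Fp : X → X →L[ℝ] Y)
    (hF : ∀ x ∈ Ω, HasFDerivAt F (Fp x) x)
    (hclosed : ∀ x ∈ Ω, IsClosed (Set.range ((Fp x) : X → Y)))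
    (xs : X) (hxs : xs ∈ Ω) (hFxs : F xs = 0) (hinj : Function.Injective ((Fp xs) : X → Y))
    (R : ℝ) (hR : 0 < R)
    (β κ : ℝ) (hβ : β = ‖pinv (Fp xs)‖)
    (hκ : κ = sSup {t ∈ Set.Ico 0 R | Metric.ball xs t ⊆ Ω})
    (f fp : ℝ → ℝ)
    (hderiv : ∀ t ∈ Set.Ico (0:ℝ) R, HasDerivWithinAt f (fp t) (Set.Ico 0 R) t)
    (hcont : ContinuousOn fp (Set.Ico 0 R))
    (hmaj : ∀ τ ∈ Set.Icc (0:ℝ) 1, ∀ x ∈ Metric.ball xs κ,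
      β * ‖Fp x - Fp (xs + τ • (x - xs))‖ ≤ fp ‖x - xs‖ - fp (τ * ‖x - xs‖))
    (hf0 : f 0 = 0) (hfp0 : fp 0 = -1) (hmono : StrictMonoOn fp (Set.Ico 0 R))
    (ν ρ r : ℝ) (hν : ν = sSup {t ∈ Set.Ico 0 R | fp t < 0})
    (hρ : ρ = sSup {δ : ℝ | δ ∈ Set.Ioo 0 ν ∧ ∀ t ∈ Set.Ioo 0 δ, (f t / fp t - t) / t < 1})
    (hr : r = min κ ρ)
    (x : ℕ → X) (hx0 : x 0 ∈ Metric.ball xs r) (hx0ne : x 0 ≠ xs)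
    (hxrec : ∀ k, x (k + 1) = x k - pinv (Fp (x k)) (F (x k))) :
    (∀ k, x k ∈ Metric.ball xs r) ∧
      Filter.Tendsto x Filter.atTop (nhds xs) ∧
      Filter.Tendsto (fun k => ‖x (k + 1) - xs‖ / ‖x k - xs‖) Filter.atTop (nhds 0) := by
  have hx0r : ‖x 0 - xs‖ < r := by rwa [mem_ball_iff_norm] at hx0
  have hx0pos : 0 < ‖x 0 - xs‖ := by
    rw [norm_pos_iff, sub_ne_zero]; exact hx0ne
  have hrpos : 0 < r := lt_trans hx0pos hx0r
  have hrκ : r ≤ κ := by rw [hr]; exact min_le_left _ _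
  have hrρ : r ≤ ρ := by rw [hr]; exact min_le_right _ _
  have hκpos : 0 < κ := lt_of_lt_of_le hrpos hrκ
  have hρpos : 0 < ρ := lt_of_lt_of_le hrpos hrρ
  -- κ facts
  have hκset_ne : ({t ∈ Set.Ico 0 R | Metric.ball xs t ⊆ Ω}).Nonempty := by
    refine ⟨0, ?_⟩
    simp only [Set.mem_setOf_eq, Set.mem_Ico]
    exact ⟨⟨le_refl 0, hR⟩, by simp⟩
  have hκR : κ ≤ R := by
    rw [hκ]; exact csSup_le hκset_ne (fun t ht => ht.1.2.le)
  have hballκ : Metric.ball xs κ ⊆ Ω := by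
    intro z hz
    rw [Metric.mem_ball] at hz
    obtain ⟨s, hs, hzs⟩ := exists_lt_of_lt_csSup hκset_ne (by rw [← hκ]; exact hz)
    exact hs.2 (Metric.mem_ball.mpr hzs)
  -- ν facts
  have hνset_ne : ({t ∈ Set.Ico 0 R | fp t < 0}).Nonempty :=
    ⟨0, by simp only [Set.mem_setOf_eq, Set.mem_Ico]; exact ⟨⟨le_refl 0, hR⟩, by rw [hfp0]; norm_num⟩⟩
  have hνR : ν ≤ R := by
    rw [hν]; exact csSup_le hνset_ne (fun t ht => ht.1.2.le)
  have hfp_neg : ∀ t : ℝ, 0 ≤ t → t < ν → fp t < 0 := by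
    intro t h0 htν
    obtain ⟨s, hs, hts⟩ := exists_lt_of_lt_csSup hνset_ne (by rw [← hν]; exact htν)
    rcases eq_or_lt_of_le hts.le with rfl | hlt
    · exact hs.2
    · exact lt_trans (hmono ⟨h0, lt_trans hlt hs.1.2⟩ hs.1 hlt) hs.2
  -- ρ facts
  set Sρ := {δ : ℝ | δ ∈ Set.Ioo 0 ν ∧ ∀ t ∈ Set.Ioo 0 δ, (f t / fp t - t) / t < 1} with hSρ
  have hSρ_ne : Sρ.Nonempty := by
    by_contra hne
    rw [Set.not_nonempty_iff_eq_empty] at hne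
    rw [hρ, hne, Real.sSup_empty] at hρpos
    exact lt_irrefl 0 hρpos
  have hρν : ρ ≤ ν := by
    rw [hρ]; exact csSup_le hSρ_ne (fun δ hδ => hδ.1.2.le)
  have hratio_lt : ∀ t : ℝ, 0 < t → t < ρ → (f t / fp t - t) / t < 1 := by
    intro t ht0 htρ
    rw [hρ] at htρ
    obtain ⟨δ, hδ, htδ⟩ := exists_lt_of_lt_csSup hSρ_ne htρ
    exact hδ.2 t ⟨ht0, htδ⟩
  have hrν : r ≤ ν := le_trans hrρ hρν
  have hrR : r ≤ R := le_trans hrκ hκR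
  -- β facts
  obtain ⟨c₀, hc₀, hA₀low⟩ := bounded_below_of_injective_closed (Fp xs) hinj (hclosed xs hxs)
  obtain ⟨hA₀li, -⟩ := pinv_lemma (Fp xs) c₀ hc₀ hA₀low
  have hβlow : ∀ u : X, ‖u‖ ≤ β * ‖Fp xs u‖ := by
    intro u
    calc ‖u‖ = ‖pinv (Fp xs) (Fp xs u)‖ := by rw [hA₀li]
      _ ≤ ‖pinv (Fp xs)‖ * ‖Fp xs u‖ := (pinv (Fp xs)).le_opNorm _
      _ = β * ‖Fp xs u‖ := by rw [hβ]
  have hβpos : 0 < β := by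
    by_contra hb
    push_neg at hb
    have h1 := hβlow (x 0 - xs)
    nlinarith [norm_nonneg (Fp xs (x 0 - xs)), hx0pos]
  -- The key one-step estimate
  have step : ∀ y : X, y ∈ Metric.ball xs r → y ≠ xs →
      ‖y - pinv (Fp y) (F y) - xs‖ ≤
        (‖y - xs‖ * fp ‖y - xs‖ - f ‖y - xs‖) / (-fp ‖y - xs‖) ∧
      (‖y - xs‖ * fp ‖y - xs‖ - f ‖y - xs‖) / (-fp ‖y - xs‖) < ‖y - xs‖ := by
    intro y hyb hyne
    set v := y - xs with hv
    set t := ‖y - xs‖ with htdef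
    have ht0 : 0 < t := by rw [htdef, norm_pos_iff, sub_ne_zero]; exact hyne
    have htr : t < r := by rwa [mem_ball_iff_norm] at hyb
    have htκ : t < κ := lt_of_lt_of_le htr hrκ
    have htR : t < R := lt_of_lt_of_le htr hrR
    have htν : t < ν := lt_of_lt_of_le htr hrν
    have htρ : t < ρ := lt_of_lt_of_le htr hrρ
    have hfpt : fp t < 0 := hfp_neg t (norm_nonneg _) htν
    have hyΩ : y ∈ Ω := hballκ (Metric.mem_ball.mpr (by rw [dist_eq_norm]; exact htκ))
    -- points on the segment
    have hseg : ∀ τ : ℝ, 0 ≤ τ → τ ≤ 1 → xs + τ • v ∈ Metric.ball xs κ := by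
      intro τ h0 h1
      rw [Metric.mem_ball, dist_eq_norm, add_sub_cancel_left, norm_smul, Real.norm_eq_abs,
        abs_of_nonneg h0]
      calc τ * ‖v‖ ≤ 1 * t := by
            apply mul_le_mul h1 (le_of_eq rfl) (norm_nonneg _) zero_le_one
        _ = t := one_mul t
        _ < κ := htκ
    have hsegΩ : ∀ τ : ℝ, 0 ≤ τ → τ ≤ 1 → xs + τ • v ∈ Ω := fun τ h0 h1 =>
      hballκ (hseg τ h0 h1)
    -- (a) operator perturbation bound at y
    have hay : β * ‖Fp y - Fp xs‖ ≤ fp t + 1 := by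
      have h := hmaj 0 ⟨le_refl 0, zero_le_one⟩ y (by
        rw [Metric.mem_ball, dist_eq_norm]; exact htκ)
      simpa [hfp0, ← htdef] using h
    -- (b) Fp y bounded below
    set c : ℝ := (-fp t) / β with hc
    have hcpos : 0 < c := by rw [hc]; exact div_pos (by linarith) hβpos
    have hBlow : ∀ u : X, c * ‖u‖ ≤ ‖Fp y u‖ := by
      intro u
      have h1 : ‖u‖ ≤ β * ‖Fp xs u‖ := hβlow u
      have h2 : ‖(Fp y - Fp xs) u‖ ≤ ‖Fp y - Fp xs‖ * ‖u‖ := (Fp y - Fp xs).le_opNorm u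
      have h3 : ‖Fp xs u‖ ≤ ‖Fp y u‖ + ‖(Fp y - Fp xs) u‖ := by
        have : Fp xs u = Fp y u - (Fp y - Fp xs) u := by
          simp [ContinuousLinearMap.sub_apply]
        rw [this]
        exact norm_sub_le _ _
      have h4 : β * ‖(Fp y - Fp xs) u‖ ≤ (fp t + 1) * ‖u‖ := by
        calc β * ‖(Fp y - Fp xs) u‖ ≤ β * (‖Fp y - Fp xs‖ * ‖u‖) := by
              exact mul_le_mul_of_nonneg_left h2 hβpos.le
          _ = (β * ‖Fp y - Fp xs‖) * ‖u‖ := by ring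
          _ ≤ (fp t + 1) * ‖u‖ := mul_le_mul_of_nonneg_right hay (norm_nonneg _)
      rw [hc, div_mul_eq_mul_div, div_le_iff₀ hβpos]
      nlinarith [norm_nonneg u, norm_nonneg (Fp y u)]
    obtain ⟨hBli, hBbound⟩ := pinv_lemma (Fp y) c hcpos hBlow
    -- (d) MVT estimate: ‖F y - Fp y v‖ ≤ (t * fp t - f t)/β
    have hkey : ‖F y - Fp y v‖ ≤ (t * fp t - f t) / β := by
      set g : ℝ → Y := fun τ => F (xs + τ • v) - τ • (Fp y v) with hg
      set B : ℝ → ℝ := fun τ => (τ * (t * fp t) - f (τ * t)) / β with hB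
      have hinner : ∀ τ : ℝ, HasDerivAt (fun σ : ℝ => xs + σ • v) v τ := by
        intro τ
        simpa using ((hasDerivAt_id τ).smul_const v).const_add xs
      have hg' : ∀ τ ∈ Set.Ico (0:ℝ) 1, HasDerivAt g (Fp (xs + τ • v) v - Fp y v) τ := by
        intro τ hτ
        have hz := hF _ (hsegΩ τ hτ.1 hτ.2.le)
        have h1 : HasDerivAt (fun σ : ℝ => F (xs + σ • v)) (Fp (xs + τ • v) v) τ :=
          hz.comp_hasDerivAt τ (hinner τ)
        have h2 : HasDerivAt (fun σ : ℝ => σ • (Fp y v)) (Fp y v) τ := by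
          simpa using (hasDerivAt_id τ).smul_const (Fp y v)
        exact h1.sub h2
      have hgc : ContinuousOn g (Set.Icc 0 1) := by
        intro τ hτ
        have hz := hF _ (hsegΩ τ hτ.1 hτ.2)
        have h1 : HasDerivAt (fun σ : ℝ => F (xs + σ • v)) (Fp (xs + τ • v) v) τ :=
          hz.comp_hasDerivAt τ (hinner τ)
        have h2 : HasDerivAt (fun σ : ℝ => σ • (Fp y v)) (Fp y v) τ := by
          simpa using (hasDerivAt_id τ).smul_const (Fp y v)
        exact ((h1.sub h2).continuousAt).continuousWithinAt
      have hBd : ∀ τ ∈ Set.Ico (0:ℝ) 1,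
          HasDerivWithinAt B ((t * fp t - fp (τ * t) * t) / β) (Set.Ici τ) τ := by
        intro τ hτ
        have hmem : Set.Icc (0:ℝ) 1 ∈ nhdsWithin τ (Set.Ici τ) :=
          Icc_mem_nhdsGE_of_mem hτ
        have hft : HasDerivWithinAt (fun σ : ℝ => f (σ * t)) (fp (τ * t) * t)
            (Set.Icc 0 1) τ := by
          have hin : HasDerivWithinAt (fun σ : ℝ => σ * t) t (Set.Icc 0 1) τ :=
            (hasDerivAt_mul_const t).hasDerivWithinAt
          have hout : HasDerivWithinAt f (fp (τ * t)) (Set.Ico 0 R) (τ * t) :=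
            hderiv (τ * t) ⟨mul_nonneg hτ.1 ht0.le, by nlinarith [hτ.2, ht0]⟩
          exact HasDerivWithinAt.comp τ hout hin (fun σ hσ =>
            ⟨mul_nonneg hσ.1 ht0.le, by nlinarith [hσ.2, ht0, htR]⟩)
        have hlin : HasDerivWithinAt (fun σ : ℝ => σ * (t * fp t)) (t * fp t)
            (Set.Icc 0 1) τ := (hasDerivAt_mul_const _).hasDerivWithinAt
        exact (((hlin.sub hft).div_const β).mono_of_mem_nhdsWithin hmem)
      have hBc : ContinuousOn B (Set.Icc 0 1) := by
        apply ContinuousOn.div_const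
        apply ContinuousOn.sub
        · exact (continuous_id.mul continuous_const).continuousOn
        · apply ContinuousOn.comp (s := Set.Icc 0 1) (t := Set.Ico 0 R)
          · intro s hs
            exact ((hderiv s hs).continuousWithinAt)
          · exact (continuous_id.mul continuous_const).continuousOn
          · intro σ hσ
            have hσ' : σ ∈ Set.Icc (0:ℝ) 1 := hσ
            rw [Set.mem_Icc] at hσ'
            constructor
            · show 0 ≤ σ * t
              exact mul_nonneg hσ'.1 ht0.le
            · show σ * t < R
              nlinarith [mul_le_mul_of_nonneg_right hσ'.2 ht0.le]
      have hbound : ∀ τ ∈ Set.Ico (0:ℝ) 1,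
          ‖Fp (xs + τ • v) v - Fp y v‖ ≤ (t * fp t - fp (τ * t) * t) / β := by
        intro τ hτ
        have hm := hmaj τ ⟨hτ.1, hτ.2.le⟩ y (by rw [Metric.mem_ball, dist_eq_norm]; exact htκ)
        rw [← htdef, ← hv] at hm
        have h1 : ‖Fp (xs + τ • v) v - Fp y v‖ ≤ ‖Fp y - Fp (xs + τ • v)‖ * t := by
          have : Fp (xs + τ • v) v - Fp y v = -((Fp y - Fp (xs + τ • v)) v) := by
            simp [ContinuousLinearMap.sub_apply]
          rw [this, norm_neg]
          calc ‖(Fp y - Fp (xs + τ • v)) v‖ ≤ ‖Fp y - Fp (xs + τ • v)‖ * ‖v‖ :=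
                (Fp y - Fp (xs + τ • v)).le_opNorm v
            _ = ‖Fp y - Fp (xs + τ • v)‖ * t := rfl
        rw [le_div_iff₀ hβpos]
        calc ‖Fp (xs + τ • v) v - Fp y v‖ * β ≤ (‖Fp y - Fp (xs + τ • v)‖ * t) * β :=
              mul_le_mul_of_nonneg_right h1 hβpos.le
          _ = (β * ‖Fp y - Fp (xs + τ • v)‖) * t := by ring
          _ ≤ (fp t - fp (τ * t)) * t := mul_le_mul_of_nonneg_right hm ht0.le
          _ = t * fp t - fp (τ * t) * t := by ring
      have happ := image_norm_le_of_norm_deriv_right_le_deriv_boundary'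
        hgc (fun τ hτ => (hg' τ hτ).hasDerivWithinAt) (by simp [hg, hB, hFxs, hf0])
        hBc hBd hbound (Set.right_mem_Icc.mpr zero_le_one)
      have hg1 : g 1 = F y - Fp y v := by
        simp [hg, hv]
      have hB1 : B 1 = (t * fp t - f t) / β := by
        simp [hB]
      rwa [hg1, hB1] at happ
    -- (e) conclude
    have hxp : y - pinv (Fp y) (F y) - xs = pinv (Fp y) (Fp y v - F y) := by
      rw [map_sub, hBli v, hv]
      abel
    constructor
    · rw [hxp]
      calc ‖pinv (Fp y) (Fp y v - F y)‖ ≤ c⁻¹ * ‖Fp y v - F y‖ := hBbound _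
        _ ≤ c⁻¹ * ((t * fp t - f t) / β) := by
            apply mul_le_mul_of_nonneg_left _ (inv_nonneg.mpr hcpos.le)
            rw [← norm_neg]
            simpa [neg_sub] using hkey
        _ = (t * fp t - f t) / (-fp t) := by
            have hfptne : fp t ≠ 0 := ne_of_lt hfpt
            rw [hc]
            field_simp
    · have hq := hratio_lt t ht0 htρ
      rw [div_lt_one ht0] at hq
      have hne : fp t ≠ 0 := ne_of_lt hfpt
      have heq : (t * fp t - f t) / (-fp t) = f t / fp t - t := by
        rw [div_eq_iff (neg_ne_zero.mpr hne), sub_mul, div_mul_eq_mul_div, mul_neg, neg_div,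
          mul_div_assoc, div_self hne]
        ring
      rw [heq]
      exact hq

  -- invariance
  have hfix : ∀ k, x k = xs → x (k + 1) = xs := by
    intro k hk
    rw [hxrec k, hk, hFxs, map_zero, sub_zero]
  have hinv : ∀ k, x k ∈ Metric.ball xs r := by
    intro k
    induction k with
    | zero => exact hx0
    | succ k ih =>
      by_cases hk : x k = xs
      · rw [hfix k hk, mem_ball_iff_norm]; simpa using hrpos
      · have hs := step (x k) ih hk
        rw [mem_ball_iff_norm, hxrec k]
        calc ‖x k - pinv (Fp (x k)) (F (x k)) - xs‖ ≤ _ := hs.1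
          _ < ‖x k - xs‖ := hs.2
          _ < r := by rwa [mem_ball_iff_norm] at ih
  refine ⟨hinv, ?_⟩
  by_cases hA : ∃ K, x K = xs
  · -- eventually constant at xs
    obtain ⟨K, hK⟩ := hA
    have hconst : ∀ k, K ≤ k → x k = xs := by
      intro k hk
      induction k, hk using Nat.le_induction with
      | base => exact hK
      | succ k hk ih => exact hfix k ih
    constructor
    · exact tendsto_atTop_of_eventually_const hconst
    · apply Tendsto.congr' (f₁ := fun _ => (0:ℝ))
      · filter_upwards [eventually_ge_atTop K] with k hk
        rw [hconst (k+1) (le_trans hk (Nat.le_succ k)), sub_self, norm_zero, zero_div]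
      · exact tendsto_const_nhds
  · push_neg at hA
    set t : ℕ → ℝ := fun k => ‖x k - xs‖ with ht
    have htpos : ∀ k, 0 < t k := fun k => by
      rw [ht, norm_pos_iff, sub_ne_zero]; exact hA k
    have htr : ∀ k, t k < r := fun k => by
      have := hinv k; rwa [mem_ball_iff_norm] at this
    have hstep' : ∀ k, t (k+1) ≤ (t k * fp (t k) - f (t k)) / (-fp (t k)) ∧
        (t k * fp (t k) - f (t k)) / (-fp (t k)) < t k := by
      intro k
      have := step (x k) (hinv k) (hA k)
      rw [← hxrec k] at this
      exact this
    have hanti : StrictAnti t := by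
      apply strictAnti_nat_of_succ_lt
      intro k
      exact lt_of_le_of_lt (hstep' k).1 (hstep' k).2
    -- limit of t
    have hbdd : BddBelow (Set.range t) := ⟨0, fun s ⟨k, hk⟩ => hk ▸ (htpos k).le⟩
    have htend : Tendsto t atTop (nhds (⨅ k, t k)) :=
      tendsto_atTop_ciInf hanti.antitone hbdd
    set L := ⨅ k, t k with hL
    have hLle : ∀ k, L ≤ t k := fun k => ciInf_le hbdd k
    have hL0 : 0 ≤ L := le_ciInf (fun k => (htpos k).le)
    have hLr : L < r := lt_of_le_of_lt (hLle 0) (htr 0)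
    have htmem : ∀ k, t k ∈ Set.Ico (0:ℝ) R := fun k =>
      ⟨(htpos k).le, lt_of_lt_of_le (htr k) hrR⟩
    have hfpk_neg : ∀ k, fp (t k) < 0 := fun k =>
      hfp_neg _ (htpos k).le (lt_of_lt_of_le (htr k) hrν)
    have hLzero : L = 0 := by
      by_contra hLne
      have hLpos : 0 < L := lt_of_le_of_ne hL0 (Ne.symm hLne)
      have hLmem : L ∈ Set.Ico (0:ℝ) R := ⟨hL0, lt_of_lt_of_le hLr hrR⟩
      have hfpL : fp L < 0 := hfp_neg L hL0 (lt_of_lt_of_le hLr hrν)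
      have hfc : Tendsto f (nhdsWithin L (Set.Ico 0 R)) (nhds (f L)) :=
        (hderiv L hLmem).continuousWithinAt
      have hfpc : Tendsto fp (nhdsWithin L (Set.Ico 0 R)) (nhds (fp L)) := hcont L hLmem
      have htendW : Tendsto t atTop (nhdsWithin L (Set.Ico 0 R)) := by
        rw [tendsto_nhdsWithin_iff]
        exact ⟨htend, Filter.Eventually.of_forall htmem⟩
      have he1 : Tendsto (fun k => (t k * fp (t k) - f (t k)) / (-fp (t k))) atTop
          (nhds ((L * fp L - f L) / (-fp L))) := by
        apply Tendsto.div
        · exact (htend.mul (hfpc.comp htendW)).sub (hfc.comp htendW)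
        · exact (hfpc.comp htendW).neg
        · exact neg_ne_zero.mpr (ne_of_lt hfpL)
      have hLle' : L ≤ (L * fp L - f L) / (-fp L) := by
        refine le_of_tendsto_of_tendsto' (htend.comp (tendsto_add_atTop_nat 1)) he1 ?_
        intro k
        exact (hstep' k).1
      have hLρ : L < ρ := lt_of_lt_of_le hLr hrρ
      have hq := hratio_lt L hLpos hLρ
      rw [div_lt_one hLpos] at hq
      have hne : fp L ≠ 0 := ne_of_lt hfpL
      have heq : (L * fp L - f L) / (-fp L) = f L / fp L - L := by
        rw [div_eq_iff (neg_ne_zero.mpr hne), sub_mul, div_mul_eq_mul_div, mul_neg, neg_div,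
          mul_div_assoc, div_self hne]
        ring
      rw [heq] at hLle'
      linarith
    rw [hLzero] at htend
    constructor
    · rw [tendsto_iff_dist_tendsto_zero]
      exact htend.congr (fun k => by rw [dist_eq_norm])
    · -- superlinear convergence
      have h0mem : (0:ℝ) ∈ Set.Ico (0:ℝ) R := ⟨le_refl 0, hR⟩
      have h0W : Tendsto t atTop (nhdsWithin 0 (Set.Ico 0 R)) := by
        rw [tendsto_nhdsWithin_iff]
        exact ⟨htend, Filter.Eventually.of_forall htmem⟩
      have hfp0' : Tendsto (fun k => fp (t k)) atTop (nhds (-1)) := by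
        have h1 : Tendsto fp (nhdsWithin 0 (Set.Ico 0 R)) (nhds (fp 0)) := hcont 0 h0mem
        have := h1.comp h0W
        rwa [hfp0] at this
      have hslope : Tendsto (fun k => f (t k) / t k) atTop (nhds (-1)) := by
        have hs := hasDerivWithinAt_iff_tendsto_slope.mp (hderiv 0 h0mem)
        have h0W' : Tendsto t atTop (nhdsWithin 0 (Set.Ico 0 R \ {0})) := by
          rw [tendsto_nhdsWithin_iff]
          exact ⟨htend, Filter.Eventually.of_forall (fun k => ⟨htmem k, (htpos k).ne'⟩)⟩
        have h2 := hs.comp h0W'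
        rw [hfp0] at h2
        refine h2.congr (fun k => ?_)
        show slope f 0 (t k) = f (t k) / t k
        rw [slope_def_field, hf0, sub_zero, sub_zero]
      have hb : Tendsto (fun k => (fp (t k) - f (t k) / t k) / (-fp (t k))) atTop (nhds 0) := by
        have h3 := (hfp0'.sub hslope).div hfp0'.neg (by norm_num)
        have h4 : ((-1:ℝ) - -1) / -(-1) = 0 := by norm_num
        rw [h4] at h3
        exact h3
      have hratio_le : ∀ k, t (k+1) / t k ≤ (fp (t k) - f (t k) / t k) / (-fp (t k)) := by
        intro k
        have h1 := (hstep' k).1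
        have heq2 : (t k * fp (t k) - f (t k)) / (-fp (t k)) / t k
            = (fp (t k) - f (t k) / t k) / (-fp (t k)) := by
          rw [div_div, mul_comm (-fp (t k)) (t k), ← div_div]
          congr 1
          rw [sub_div, mul_comm, mul_div_assoc, div_self (htpos k).ne', mul_one]
        rw [← heq2]
        exact (div_le_div_iff_of_pos_right (htpos k)).mpr h1
      refine squeeze_zero (fun k => div_nonneg (norm_nonneg _) (norm_nonneg _))
        (fun k => hratio_le k) hb
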